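/- Let Φ be the multilinear extension of φ and suppose |φ(a)| ≤ Φ_max for every action profile a. Then for every x ∈ Δ^n the Hessian ∇²Φ(x) has spectral norm at most n·A_max·Φ_max; consequently the gradient ∇Φ is Lipschitz on Δ^n with constant n·A_max·Φ_max, i.e., Φ is (n·A_max·Φ_max)-smooth on Δ^n. -/

import Mathlib

open scoped BigOperators

noncomputable section

/-- The probability simplex `Δ(A_i) ⊆ ℝ^{|A_i|}` with the Euclidean norm. -/
def simplex (k : ℕ) : Set (EuclideanSpace ℝ (Fin k)) :=
  {x | (∀ j, 0 ≤ x j) ∧ ∑ j, x j = 1}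

/-- The joint strategy space `ℝ^{|A_1|} × ⋯ × ℝ^{|A_n|}` with the Euclidean (ℓ²) norm. -/
abbrev Strat (n : ℕ) (A : Fin n → ℕ) := PiLp 2 fun i => EuclideanSpace ℝ (Fin (A i))

/-- The product of simplices `Δ^n = Δ(A_1) × ⋯ × Δ(A_n)`. -/
def prodSimplex (n : ℕ) (A : Fin n → ℕ) : Set (Strat n A) :=
  {x | ∀ i, x i ∈ simplex (A i)}

/-- The multilinear extension `Φ(x) = ∑_a φ(a) ∏_i x_i(a_i)` of `φ`. -/
def pot (n : ℕ) (A : Fin n → ℕ) (φ : (∀ i, Fin (A i)) → ℝ) (x : Strat n A) : ℝ :=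
  ∑ a : ∀ i, Fin (A i), φ a * ∏ i, x i (a i)

namespace PotAux

/-- ℓ¹–ℓ² estimate on Euclidean space. -/
lemma sum_abs_le {k : ℕ} (u : EuclideanSpace ℝ (Fin k)) :
    ∑ α, |u α| ≤ Real.sqrt k * ‖u‖ := by
  have h0 : (0:ℝ) ≤ ∑ α, |u α| := Finset.sum_nonneg fun _ _ => abs_nonneg _
  have hn : ‖u‖ ^ 2 = ∑ α, |u α| ^ 2 := by
    rw [EuclideanSpace.norm_eq, Real.sq_sqrt (by positivity)]
    simp [Real.norm_eq_abs]
  have h1 : (∑ α, |u α|) ^ 2 ≤ (k : ℝ) * ‖u‖ ^ 2 := by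
    rw [hn]
    simpa using sq_sum_le_card_mul_sum_sq (s := (Finset.univ : Finset (Fin k)))
      (f := fun α => |u α|)
  calc ∑ α, |u α| = Real.sqrt ((∑ α, |u α|) ^ 2) := (Real.sqrt_sq h0).symm
    _ ≤ Real.sqrt ((k : ℝ) * ‖u‖ ^ 2) := Real.sqrt_le_sqrt h1
    _ = Real.sqrt k * ‖u‖ := by
        rw [Real.sqrt_mul (by positivity), Real.sqrt_sq (norm_nonneg _)]

/-- ℓ¹–ℓ² estimate on the product space. -/
lemma sum_norm_le {n : ℕ} {A : Fin n → ℕ} (m : Strat n A) :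
    ∑ i, ‖m i‖ ≤ Real.sqrt n * ‖m‖ := by
  have h0 : (0:ℝ) ≤ ∑ i, ‖m i‖ := Finset.sum_nonneg fun _ _ => norm_nonneg _
  have hn : ‖m‖ ^ 2 = ∑ i, ‖m i‖ ^ 2 := by
    rw [PiLp.norm_eq_of_L2, Real.sq_sqrt (by positivity)]
  have h1 : (∑ i, ‖m i‖) ^ 2 ≤ (n : ℝ) * ‖m‖ ^ 2 := by
    rw [hn]
    simpa using sq_sum_le_card_mul_sum_sq (s := (Finset.univ : Finset (Fin n)))
      (f := fun i => ‖m i‖)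
  calc ∑ i, ‖m i‖ = Real.sqrt ((∑ i, ‖m i‖) ^ 2) := (Real.sqrt_sq h0).symm
    _ ≤ Real.sqrt ((n : ℝ) * ‖m‖ ^ 2) := Real.sqrt_le_sqrt h1
    _ = Real.sqrt n * ‖m‖ := by
        rw [Real.sqrt_mul (by positivity), Real.sqrt_sq (norm_nonneg _)]

variable {n : ℕ} {A : Fin n → ℕ} (φ : (∀ i, Fin (A i)) → ℝ)

/-- The multilinear extension as a bundled continuous multilinear map. -/
def potM : ContinuousMultilinearMap ℝ (fun i : Fin n => EuclideanSpace ℝ (Fin (A i))) ℝ :=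
  ∑ a : ∀ i, Fin (A i), φ a •
    (ContinuousMultilinearMap.mkPiAlgebra ℝ (Fin n) ℝ).compContinuousLinearMap
      (fun i => EuclideanSpace.proj (a i))

lemma potM_apply (y : ∀ i : Fin n, EuclideanSpace ℝ (Fin (A i))) :
    potM φ y = ∑ a : ∀ i, Fin (A i), φ a * ∏ i, y i (a i) := by
  simp [potM, ContinuousMultilinearMap.sum_apply]

lemma pot_eq : pot n A φ = (fun y => potM φ y) ∘
    ⇑((PiLp.continuousLinearEquiv 2 ℝ (fun i : Fin n => EuclideanSpace ℝ (Fin (A i)))) :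
       Strat n A →L[ℝ] (∀ i : Fin n, EuclideanSpace ℝ (Fin (A i)))) := by
  funext x
  simp [pot, potM_apply, Function.comp]

lemma iteratedFDeriv_pot_eq (x : Strat n A) (m : Fin 2 → Strat n A) :
    iteratedFDeriv ℝ 2 (pot n A φ) x m
      = (potM φ).iteratedFDeriv 2 (fun i => x i) (fun l i => m l i) := by
  rw [pot_eq φ]
  rw [ContinuousLinearMap.iteratedFDeriv_comp_right _
    (ContinuousMultilinearMap.contDiff _) x (n := (⊤ : WithTop ℕ∞)) le_top]
  rw [ContinuousMultilinearMap.compContinuousLinearMap_apply]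
  rw [ContinuousMultilinearMap.iteratedFDeriv_eq]
  rfl

lemma apos_of_mem {x : Strat n A} (hx : x ∈ prodSimplex n A) (k : Fin n) : 0 < A k := by
  by_contra h
  have hk : A k = 0 := by omega
  have hempty : IsEmpty (Fin (A k)) := by rw [hk]; infer_instance
  have h1 := (hx k).2
  rw [Finset.univ_eq_empty, Finset.sum_empty] at h1
  norm_num at h1

lemma hΦ0' {Φmax : ℝ} (hφ : ∀ a, |φ a| ≤ Φmax) {x : Strat n A}
    (hx : x ∈ prodSimplex n A) : 0 ≤ Φmax :=
  le_trans (abs_nonneg _) (hφ (fun k => ⟨0, apos_of_mem hx k⟩))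

lemma sum_abs_simplex {k : ℕ} {u : EuclideanSpace ℝ (Fin k)} (hu : u ∈ simplex k) :
    ∑ α, |u α| = 1 := by
  rw [← hu.2]
  exact Finset.sum_congr rfl fun α _ => abs_of_nonneg (hu.1 α)

/-- Bound on `M w` when `w` agrees with a point of the product simplex except at
two coordinates. -/
lemma potM_mixed_bound {Φmax : ℝ} (hφ : ∀ a, |φ a| ≤ Φmax)
    {Amax : ℕ} (hA : ∀ i, A i ≤ Amax)
    {x : Strat n A} (hx : x ∈ prodSimplex n A) {i j : Fin n} (hij : i ≠ j)
    (w : ∀ k : Fin n, EuclideanSpace ℝ (Fin (A k)))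
    (hw : ∀ k, k ≠ i → k ≠ j → w k = x k) :
    |potM φ w| ≤ Φmax * ((Amax : ℝ) * (‖w i‖ * ‖w j‖)) := by
  have hΦ0 : 0 ≤ Φmax := hΦ0' φ hφ hx
  set c : Fin n → ℝ := fun k => ∑ α, |w k α| with hc
  have hc0 : ∀ k, 0 ≤ c k := fun k => Finset.sum_nonneg fun _ _ => abs_nonneg _
  have step1 : |potM φ w| ≤ Φmax * ∏ k, c k := by
    rw [potM_apply]
    calc |∑ a : ∀ k, Fin (A k), φ a * ∏ k, w k (a k)|
        ≤ ∑ a : ∀ k, Fin (A k), |φ a * ∏ k, w k (a k)| := Finset.abs_sum_le_sum_abs _ _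
      _ = ∑ a : ∀ k, Fin (A k), |φ a| * ∏ k, |w k (a k)| := by
          simp [abs_mul, Finset.abs_prod]
      _ ≤ ∑ a : ∀ k, Fin (A k), Φmax * ∏ k, |w k (a k)| := by
          refine Finset.sum_le_sum fun a _ => ?_
          exact mul_le_mul_of_nonneg_right (hφ a)
            (Finset.prod_nonneg fun _ _ => abs_nonneg _)
      _ = Φmax * ∑ a : ∀ k, Fin (A k), ∏ k, |w k (a k)| := by rw [Finset.mul_sum]
      _ = Φmax * ∏ k, c k := by
          congr 1
          rw [Finset.prod_univ_sum]
          rw [← Fintype.piFinset_univ]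
  have hprod : ∏ k, c k = c i * c j := by
    have hji : j ∈ Finset.univ.erase i := by simp [Finset.mem_erase, hij.symm]
    rw [← Finset.mul_prod_erase Finset.univ c (Finset.mem_univ i),
        ← Finset.mul_prod_erase _ c hji]
    have : ∏ k ∈ (Finset.univ.erase i).erase j, c k = 1 := by
      refine Finset.prod_eq_one fun k hk => ?_
      simp only [Finset.mem_erase] at hk
      rw [hc]
      simp only []
      rw [hw k hk.2.1 hk.1]
      exact sum_abs_simplex (hx k)
    rw [this, mul_one]
  have hci : c i ≤ Real.sqrt Amax * ‖w i‖ := by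
    refine le_trans (sum_abs_le (w i)) ?_
    have : Real.sqrt (A i) ≤ Real.sqrt Amax :=
      Real.sqrt_le_sqrt (by exact_mod_cast hA i)
    exact mul_le_mul_of_nonneg_right this (norm_nonneg _)
  have hcj : c j ≤ Real.sqrt Amax * ‖w j‖ := by
    refine le_trans (sum_abs_le (w j)) ?_
    have : Real.sqrt (A j) ≤ Real.sqrt Amax :=
      Real.sqrt_le_sqrt (by exact_mod_cast hA j)
    exact mul_le_mul_of_nonneg_right this (norm_nonneg _)
  have hcij : c i * c j ≤ (Amax : ℝ) * (‖w i‖ * ‖w j‖) := by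
    have h1 : c i * c j ≤ (Real.sqrt Amax * ‖w i‖) * (Real.sqrt Amax * ‖w j‖) :=
      mul_le_mul hci hcj (hc0 j) (by positivity)
    have h2 : (Real.sqrt Amax * ‖w i‖) * (Real.sqrt Amax * ‖w j‖)
        = (Amax : ℝ) * (‖w i‖ * ‖w j‖) := by
      rw [show (Real.sqrt Amax * ‖w i‖) * (Real.sqrt Amax * ‖w j‖)
          = (Real.sqrt Amax * Real.sqrt Amax) * (‖w i‖ * ‖w j‖) by ring,
        Real.mul_self_sqrt (Nat.cast_nonneg _)]
    exact h1.trans_eq h2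
  calc |potM φ w| ≤ Φmax * ∏ k, c k := step1
    _ = Φmax * (c i * c j) := by rw [hprod]
    _ ≤ Φmax * ((Amax : ℝ) * (‖w i‖ * ‖w j‖)) :=
        mul_le_mul_of_nonneg_left hcij hΦ0

/-- Explicit form of the second derivative of the (diagonal of the) multilinear map. -/
lemma happly (x : Strat n A) (m : Fin 2 → Strat n A) :
    (potM φ).iteratedFDeriv 2 (fun i => x i) (fun l i => m l i)
      = ∑ e : Fin 2 ↪ Fin n, potM φ
          (fun k => if h : ∃ l : Fin 2, e l = k
            then m (e.toEquivRange.symm ⟨k, h⟩) k else x k) := by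
  rw [ContinuousMultilinearMap.iteratedFDeriv, ContinuousMultilinearMap.sum_apply]
  refine Finset.sum_congr rfl fun e _ => ?_
  rw [ContinuousMultilinearMap.iteratedFDerivComponent_apply]
  congr 1
  funext k
  simp only [Set.mem_range, Pi.compRightL_apply]
  split_ifs with h
  · exact congrArg (fun d : DecidableEq (Fin n) =>
      (m ((@Function.Embedding.toEquivRange _ _ _ d e).symm ⟨k, h⟩)) k) (Subsingleton.elim _ _)
  · rfl

/-- The central estimate: the second derivative of the potential, as a bilinear form at a
point of the product simplex, is bounded by `n·Amax·Φmax`. -/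
lemma key_bound {Φmax : ℝ} (hφ : ∀ a, |φ a| ≤ Φmax)
    {Amax : ℕ} (hA : ∀ i, A i ≤ Amax)
    {x : Strat n A} (hx : x ∈ prodSimplex n A) (m : Fin 2 → Strat n A) :
    |(potM φ).iteratedFDeriv 2 (fun i => x i) (fun l i => m l i)|
      ≤ ((n : ℝ) * Amax * Φmax) * ‖m 0‖ * ‖m 1‖ := by
  have hΦ0 : 0 ≤ Φmax := hΦ0' φ hφ hx
  have htwo : ∀ l : Fin 2, l = 0 ∨ l = 1 := by decide
  have hterm : ∀ e : Fin 2 ↪ Fin n,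
      |potM φ (fun k => if h : ∃ l : Fin 2, e l = k
          then m (e.toEquivRange.symm ⟨k, h⟩) k else x k)|
        ≤ Φmax * ((Amax : ℝ) * (‖m 0 (e 0)‖ * ‖m 1 (e 1)‖)) := by
    intro e
    set w : ∀ k : Fin n, EuclideanSpace ℝ (Fin (A k)) := fun k =>
      if h : ∃ l : Fin 2, e l = k then m (e.toEquivRange.symm ⟨k, h⟩) k else x k with hwdef
    have hij : e 0 ≠ e 1 := fun h => by simpa using e.injective h
    have hw0 : w (e 0) = m 0 (e 0) := by
      have h : ∃ l : Fin 2, e l = e 0 := ⟨0, rfl⟩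
      simp only [hwdef, dif_pos h, Function.Embedding.toEquivRange_symm_apply_self]
    have hw1 : w (e 1) = m 1 (e 1) := by
      have h : ∃ l : Fin 2, e l = e 1 := ⟨1, rfl⟩
      simp only [hwdef, dif_pos h, Function.Embedding.toEquivRange_symm_apply_self]
    have hrest : ∀ k, k ≠ e 0 → k ≠ e 1 → w k = x k := by
      intro k h0 h1
      have h : ¬ ∃ l : Fin 2, e l = k := by
        rintro ⟨l, rfl⟩
        rcases htwo l with rfl | rfl
        · exact h0 rfl
        · exact h1 rfl
      simp only [hwdef, dif_neg h]
    have := potM_mixed_bound φ hφ hA hx hij w hrest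
    rwa [hw0, hw1] at this
  rw [happly]
  calc |∑ e : Fin 2 ↪ Fin n, potM φ (fun k => if h : ∃ l : Fin 2, e l = k
          then m (e.toEquivRange.symm ⟨k, h⟩) k else x k)|
      ≤ ∑ e : Fin 2 ↪ Fin n, |potM φ (fun k => if h : ∃ l : Fin 2, e l = k
          then m (e.toEquivRange.symm ⟨k, h⟩) k else x k)| := Finset.abs_sum_le_sum_abs _ _
    _ ≤ ∑ e : Fin 2 ↪ Fin n, Φmax * ((Amax : ℝ) * (‖m 0 (e 0)‖ * ‖m 1 (e 1)‖)) :=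
        Finset.sum_le_sum fun e _ => hterm e
    _ = Φmax * ((Amax : ℝ) * ∑ e : Fin 2 ↪ Fin n, ‖m 0 (e 0)‖ * ‖m 1 (e 1)‖) := by
        rw [Finset.mul_sum, Finset.mul_sum]
    _ ≤ Φmax * ((Amax : ℝ) * ∑ p : Fin n × Fin n, ‖m 0 p.1‖ * ‖m 1 p.2‖) := by
        refine mul_le_mul_of_nonneg_left (mul_le_mul_of_nonneg_left ?_ (Nat.cast_nonneg _)) hΦ0
        have hinj : ∀ e₁ ∈ (Finset.univ : Finset (Fin 2 ↪ Fin n)), ∀ e₂ ∈ Finset.univ,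
            (fun e : Fin 2 ↪ Fin n => ((e 0 : Fin n), (e 1 : Fin n))) e₁ =
            (fun e : Fin 2 ↪ Fin n => ((e 0 : Fin n), (e 1 : Fin n))) e₂ → e₁ = e₂ := by
          intro e₁ _ e₂ _ h
          simp only [Prod.mk.injEq] at h
          refine Function.Embedding.ext fun l => ?_
          rcases htwo l with rfl | rfl
          · exact h.1
          · exact h.2
        rw [← Finset.sum_image (f := fun p : Fin n × Fin n => ‖m 0 p.1‖ * ‖m 1 p.2‖)
          (g := fun e : Fin 2 ↪ Fin n => (e 0, e 1)) hinj]
        refine Finset.sum_le_sum_of_subset_of_nonneg (Finset.subset_univ _)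
          fun p _ _ => by positivity
    _ = Φmax * ((Amax : ℝ) * ((∑ i, ‖m 0 i‖) * (∑ j, ‖m 1 j‖))) := by
        congr 1
        congr 1
        rw [Finset.sum_mul_sum, ← Finset.univ_product_univ, Finset.sum_product]
    _ ≤ Φmax * ((Amax : ℝ) * ((Real.sqrt n * ‖m 0‖) * (Real.sqrt n * ‖m 1‖))) := by
        refine mul_le_mul_of_nonneg_left (mul_le_mul_of_nonneg_left ?_ (Nat.cast_nonneg _)) hΦ0
        exact mul_le_mul (sum_norm_le _) (sum_norm_le _)
          (Finset.sum_nonneg fun _ _ => norm_nonneg _) (by positivity)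
    _ = ((n : ℝ) * Amax * Φmax) * ‖m 0‖ * ‖m 1‖ := by
        have hs : Real.sqrt n * Real.sqrt n = (n : ℝ) :=
          Real.mul_self_sqrt (Nat.cast_nonneg _)
        linear_combination (Φmax * (Amax : ℝ) * ‖m 0‖ * ‖m 1‖) * hs

lemma convex_prodSimplex : Convex ℝ (prodSimplex n A) := by
  intro x hx y hy a b ha hb hab
  intro i
  have hcoord : ∀ j, (a • x + b • y) i j = a * x i j + b * y i j := fun j => rfl
  constructor
  · intro j
    rw [hcoord j]
    have h1 := (hx i).1 j
    have h2 := (hy i).1 j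
    positivity
  · calc ∑ j, (a • x + b • y) i j = ∑ j, (a * x i j + b * y i j) := by
          exact Finset.sum_congr rfl fun j _ => hcoord j
      _ = a * ∑ j, x i j + b * ∑ j, y i j := by
          rw [Finset.sum_add_distrib, Finset.mul_sum, Finset.mul_sum]
      _ = 1 := by rw [(hx i).2, (hy i).2, mul_one, mul_one, hab]

end PotAux

/-- **Smoothness of the potential.**  If `|φ(a)| ≤ Φmax` for every action profile `a` and
`|A_i| ≤ Amax` for every player, then at every `x ∈ Δ^n` the Hessian of the multilinear
extension `Φ` has spectral norm (norm as a bilinear form) at most `n·Amax·Φmax`, and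
consequently the gradient `∇Φ` is Lipschitz on `Δ^n` with constant `n·Amax·Φmax`,
i.e. `Φ` is `(n·Amax·Φmax)`-smooth on `Δ^n`. -/
theorem potential_smooth (n : ℕ) (A : Fin n → ℕ) (φ : (∀ i, Fin (A i)) → ℝ)
    (Φmax : ℝ) (hφ : ∀ a, |φ a| ≤ Φmax)
    (Amax : ℕ) (hA : ∀ i, A i ≤ Amax) :
    (∀ x ∈ prodSimplex n A,
      ‖iteratedFDeriv ℝ 2 (pot n A φ) x‖ ≤ (n : ℝ) * Amax * Φmax) ∧
    LipschitzOnWith ((n : ℝ) * Amax * Φmax).toNNReal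
      (gradient (pot n A φ)) (prodSimplex n A) := by
  set C : ℝ := (n : ℝ) * Amax * Φmax with hCdef
  have hC : ∀ x ∈ prodSimplex n A, (0:ℝ) ≤ C := by
    intro x hx
    have := PotAux.hΦ0' φ hφ hx
    have h1 : (0:ℝ) ≤ (n : ℝ) := Nat.cast_nonneg _
    have h2 : (0:ℝ) ≤ (Amax : ℝ) := Nat.cast_nonneg _
    rw [hCdef]; positivity
  have key : ∀ x ∈ prodSimplex n A, ∀ m : Fin 2 → Strat n A,
      ‖iteratedFDeriv ℝ 2 (pot n A φ) x m‖ ≤ C * ‖m 0‖ * ‖m 1‖ := by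
    intro x hx m
    rw [PotAux.iteratedFDeriv_pot_eq, Real.norm_eq_abs]
    exact PotAux.key_bound φ hφ hA hx m
  constructor
  · intro x hx
    refine ContinuousMultilinearMap.opNorm_le_bound (hC x hx) fun m => ?_
    calc ‖iteratedFDeriv ℝ 2 (pot n A φ) x m‖ ≤ C * ‖m 0‖ * ‖m 1‖ := key x hx m
      _ = C * ∏ l, ‖m l‖ := by rw [Fin.prod_univ_two]; ring
  · -- Lipschitz continuity of the gradient
    have hsmooth : ContDiff ℝ (⊤ : WithTop ℕ∞) (pot n A φ) := by
      rw [PotAux.pot_eq φ]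
      exact (ContinuousMultilinearMap.contDiff _).comp (ContinuousLinearMap.contDiff _)
    have hdiff : ∀ z ∈ prodSimplex n A, DifferentiableAt ℝ (fderiv ℝ (pot n A φ)) z := by
      intro z _
      have h1 : ContDiff ℝ (⊤ : WithTop ℕ∞) (fderiv ℝ (pot n A φ)) :=
        hsmooth.fderiv_right le_top
      exact (h1.differentiable (by simp)).differentiableAt
    have hbound : ∀ z ∈ prodSimplex n A, ‖fderiv ℝ (fderiv ℝ (pot n A φ)) z‖ ≤ C := by
      intro z hz
      refine ContinuousLinearMap.opNorm_le_bound _ (hC z hz) fun u => ?_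
      refine ContinuousLinearMap.opNorm_le_bound _
        (mul_nonneg (hC z hz) (norm_nonneg u)) fun v => ?_
      have h := key z hz ![u, v]
      rw [iteratedFDeriv_two_apply] at h
      simpa using h
    refine LipschitzOnWith.of_dist_le_mul fun x hx y hy => ?_
    have hgrad : ∀ z : Strat n A, gradient (pot n A φ) z
        = (InnerProductSpace.toDual ℝ (Strat n A)).symm (fderiv ℝ (pot n A φ) z) :=
      fun z => rfl
    have hmain : dist (gradient (pot n A φ) x) (gradient (pot n A φ) y)
        = ‖fderiv ℝ (pot n A φ) x - fderiv ℝ (pot n A φ) y‖ := by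
      rw [dist_eq_norm, hgrad, hgrad, ← map_sub, LinearIsometryEquiv.norm_map]
    rw [hmain]
    have := PotAux.convex_prodSimplex.norm_image_sub_le_of_norm_fderiv_le
      hdiff hbound hy hx
    calc ‖fderiv ℝ (pot n A φ) x - fderiv ℝ (pot n A φ) y‖ ≤ C * ‖x - y‖ := this
      _ ≤ (C.toNNReal : ℝ) * ‖x - y‖ :=
          mul_le_mul_of_nonneg_right (Real.le_coe_toNNReal C) (norm_nonneg _)
      _ = (C.toNNReal : ℝ) * dist x y := by rw [dist_eq_norm]

end
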